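/- The fixed point Q* of the generalized Bellman operator H^w and the fixed point Q' of the standard Q-Bellman operator H satisfy max_a Q*(i,a) = max_a Q'(i,a) for every state i. -/

import Mathlib

/-- Pulling a positive scalar and an additive constant out of a finite supremum. -/
lemma aux_sup_affine {A : Type*} [Fintype A] [Nonempty A] (w c : ℝ) (hw0 : 0 < w)
    (f : A → ℝ) : (⨆ a, (w * f a + c)) = w * (⨆ a, f a) + c := by
  apply le_antisymm
  · apply ciSup_le
    intro a
    have h := le_ciSup (Finite.bddAbove_range f) a
    nlinarith
  · have h : (⨆ a, f a) ≤ ((⨆ a, (w * f a + c)) - c) / w := by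
      apply ciSup_le
      intro a
      rw [le_div_iff₀ hw0]
      have h2 := le_ciSup (Finite.bddAbove_range (fun a => w * f a + c)) a
      beta_reduce at h2
      linarith [h2]
    rw [le_div_iff₀ hw0] at h
    nlinarith
  
/-- |sup f - sup g| ≤ C if pointwise |f - g| ≤ C. -/
lemma aux_sup_diff {A : Type*} [Fintype A] [Nonempty A] (f g : A → ℝ) (C : ℝ)
    (h : ∀ a, |f a - g a| ≤ C) : |(⨆ a, f a) - ⨆ a, g a| ≤ C := by
  rw [abs_sub_le_iff]
  constructor
  · rw [sub_le_iff_le_add]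
    apply ciSup_le
    intro a
    have h1 := le_ciSup (Finite.bddAbove_range g) a
    have h2 := abs_le.mp (h a)
    linarith [h2.2]
  · rw [sub_le_iff_le_add]
    apply ciSup_le
    intro a
    have h1 := le_ciSup (Finite.bddAbove_range f) a
    have h2 := abs_le.mp (h a)
    linarith [h2.1]

/-- The fixed point Q* of H^w and the fixed point Q' of the standard Bellman operator H
have the same induced value function: max_a Q*(i,a) = max_a Q'(i,a) for every state i. -/
theorem stmt_9 {S A : Type*} [Fintype S] [Fintype A] [Nonempty S] [Nonempty A]
    (γ w : ℝ) (P : S → A → S → ℝ) (R : S → A → ℝ)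
    (hγ0 : 0 < γ) (hγ1 : γ < 1)
    (hP0 : ∀ i a j, 0 ≤ P i a j) (hP1 : ∀ i a, ∑ j, P i a j = 1)
    (hw0 : 0 < w)
    (hw : w ≤ Finset.univ.inf' Finset.univ_nonempty
      (fun p : S × A => 1 / (1 - γ * P p.1 p.2 p.1)))
    (Qs Q' : S × A → ℝ)
    (hQs : ∀ i a, w * (R i a + γ * ∑ j, P i a j * (⨆ b, Qs (j, b)))
        + (1 - w) * (⨆ c, Qs (i, c)) = Qs (i, a))
    (hQ' : ∀ i a, R i a + γ * ∑ j, P i a j * (⨆ b, Q' (j, b)) = Q' (i, a)) :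
    ∀ i : S, (⨆ a, Qs (i, a)) = ⨆ a, Q' (i, a) := by
  set V : S → ℝ := fun i => ⨆ a, Qs (i, a) with hVdef
  set V' : S → ℝ := fun i => ⨆ a, Q' (i, a) with hV'def
  -- Step 1: V satisfies the Bellman optimality equation
  have hT : ∀ i, V i = ⨆ a, (R i a + γ * ∑ j, P i a j * V j) := by
    intro i
    have h1 : V i = ⨆ a, (w * (R i a + γ * ∑ j, P i a j * V j) + (1 - w) * V i) := by
      simp only [hVdef]
      exact iSup_congr fun a => (hQs i a).symm
    rw [aux_sup_affine w ((1 - w) * V i) hw0] at h1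
    have h2 : w * V i = w * (⨆ a, (R i a + γ * ∑ j, P i a j * V j)) := by linarith
    exact mul_left_cancel₀ hw0.ne' h2
  have hT' : ∀ i, V' i = ⨆ a, (R i a + γ * ∑ j, P i a j * V' j) := by
    intro i
    exact iSup_congr fun a => (hQ' i a).symm
  -- Step 2: contraction
  set M : ℝ := ⨆ i, |V i - V' i| with hMdef
  have hle : ∀ j, |V j - V' j| ≤ M := by
    intro j
    rw [hMdef]
    exact le_ciSup (Finite.bddAbove_range (fun j => |V j - V' j|)) j
  have hM0 : 0 ≤ M := by
    obtain ⟨i0⟩ := (inferInstance : Nonempty S)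
    exact le_trans (abs_nonneg _) (hle i0)
  have hMle : M ≤ γ * M := by
    apply ciSup_le
    intro i
    rw [hT i, hT' i]
    apply aux_sup_diff
    intro a
    have hdiff : (R i a + γ * ∑ j, P i a j * V j) - (R i a + γ * ∑ j, P i a j * V' j)
        = γ * ∑ j, P i a j * (V j - V' j) := by
      have hs : ∑ j, P i a j * (V j - V' j)
          = (∑ j, P i a j * V j) - ∑ j, P i a j * V' j := by
        rw [← Finset.sum_sub_distrib]
        exact Finset.sum_congr rfl fun j _ => mul_sub _ _ _
      rw [hs]
      ring
    rw [hdiff, abs_mul, abs_of_pos hγ0]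
    have hsum : |∑ j, P i a j * (V j - V' j)| ≤ M := by
      calc |∑ j, P i a j * (V j - V' j)| ≤ ∑ j, |P i a j * (V j - V' j)| :=
            Finset.abs_sum_le_sum_abs _ _
        _ = ∑ j, P i a j * |V j - V' j| := by
            apply Finset.sum_congr rfl
            intro j _
            rw [abs_mul, abs_of_nonneg (hP0 i a j)]
        _ ≤ ∑ j, P i a j * M := by
            apply Finset.sum_le_sum
            intro j _
            exact mul_le_mul_of_nonneg_left (hle j) (hP0 i a j)
        _ = M := by rw [← Finset.sum_mul, hP1 i a, one_mul]
    nlinarith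
  have hMeq : M ≤ 0 := by nlinarith
  intro i
  have h1 : |V i - V' i| ≤ M := hle i
  have h2 : V i = V' i := by
    have := abs_nonneg (V i - V' i)
    have : |V i - V' i| = 0 := le_antisymm (h1.trans hMeq) this
    have := abs_eq_zero.mp this
    linarith
  exact h2
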